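/- If a vector sublattice S of a vector lattice Z is regular, then every net in S that uo-converges to 0 in S also uo-converges to 0 in Z. -/

import Mathlib

set_option linter.unusedSectionVars false
set_option maxHeartbeats 1000000

open Filter Set

section ODual

variable (E : Type*) [AddCommGroup E] [Preorder E] [Module ℝ E]

/-- The order (bounded) dual: linear functionals bounded on order intervals. -/
noncomputable def obDual : Submodule ℝ (E →ₗ[ℝ] ℝ) where
  carrier := {f | ∀ w : E, ∃ M : ℝ, ∀ x : E, -w ≤ x → x ≤ w → |f x| ≤ M}
  zero_mem' := fun w => ⟨0, fun x _ _ => by simp⟩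
  add_mem' := fun {f g} hf hg w => by
    obtain ⟨M, hM⟩ := hf w
    obtain ⟨N, hN⟩ := hg w
    refine ⟨M + N, fun x h1 h2 => ?_⟩
    calc |(f + g) x| = |f x + g x| := by simp
    _ ≤ |f x| + |g x| := abs_add_le _ _
    _ ≤ M + N := add_le_add (hM x h1 h2) (hN x h1 h2)
  smul_mem' := fun c f hf => by
    intro w
    obtain ⟨M, hM⟩ := hf w
    refine ⟨|c| * M, fun x h1 h2 => ?_⟩
    calc |(c • f) x| = |c| * |f x| := by simp [abs_mul]
    _ ≤ |c| * M := mul_le_mul_of_nonneg_left (hM x h1 h2) (abs_nonneg c)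

/-- The pointwise-on-positive-elements (pre)order on a space of functionals. -/
instance instSubPre (Y : Submodule ℝ (E →ₗ[ℝ] ℝ)) : Preorder Y where
  le f g := ∀ x : E, 0 ≤ x → (f : E →ₗ[ℝ] ℝ) x ≤ (g : E →ₗ[ℝ] ℝ) x
  le_refl f x _ := le_rfl
  le_trans f g h h1 h2 x hx := (h1 x hx).trans (h2 x hx)

variable {E}

theorem subPre_le_iff {Y : Submodule ℝ (E →ₗ[ℝ] ℝ)} {f g : Y} :
    f ≤ g ↔ ∀ x : E, 0 ≤ x → (f : E →ₗ[ℝ] ℝ) x ≤ (g : E →ₗ[ℝ] ℝ) x := Iff.rfl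

/-- Order convergence of a net to a limit (sandwich form: eventually
`l - d ≤ x_α ≤ l + d` for every `d` in a set directed downward to `0`). -/
def OConvTo {ι : Type*} [Preorder ι] (x : ι → E) (l : E) : Prop :=
  ∃ D : Set E, D.Nonempty ∧ DirectedOn (· ≥ ·) D ∧ IsGLB D 0 ∧
    ∀ d ∈ D, ∃ α₀ : ι, ∀ α, α₀ ≤ α → l - d ≤ x α ∧ x α ≤ l + d

/-- Order continuity of a linear functional: `f(x_α) → 0` whenever `x_α ↓ 0`. -/
def OrdContE (f : E →ₗ[ℝ] ℝ) : Prop :=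
  ∀ D : Set E, D.Nonempty → DirectedOn (· ≥ ·) D → IsGLB D 0 →
    ∀ ε : ℝ, 0 < ε → ∃ d ∈ D, ∀ e ∈ D, e ≤ d → |f e| < ε

end ODual

section VL

variable (X : Type*) [Lattice X] [AddCommGroup X]
  [CovariantClass X X (· + ·) (· ≤ ·)] [Module ℝ X] [PosSMulMono ℝ X]

variable {X} in
/-- Unbounded order convergence: `|x_α - l| ⊓ u →o 0` for every `u ≥ 0`. -/
def uoConvTo {ι : Type*} [Preorder ι] (x : ι → X) (l : X) : Prop :=
  ∀ u : X, 0 ≤ u → OConvTo (fun α => |x α - l| ⊓ u) (0 : X)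

/-- The canonical evaluation of `x ∈ X` on a space `Y` of functionals on `X`. -/
def hatFun (Y : Submodule ℝ (X →ₗ[ℝ] ℝ)) (x : X) : Y →ₗ[ℝ] ℝ where
  toFun f := (f : X →ₗ[ℝ] ℝ) x
  map_add' f g := by simp
  map_smul' c f := by simp

theorem hatFun_mem (Y : Submodule ℝ (X →ₗ[ℝ] ℝ)) (x : X) :
    hatFun X Y x ∈ obDual Y := by
  intro w
  refine ⟨(w : X →ₗ[ℝ] ℝ) (x⁺) + (w : X →ₗ[ℝ] ℝ) (x⁻), fun f h1 h2 => ?_⟩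
  have hp : (0 : X) ≤ x⁺ := posPart_nonneg x
  have hn : (0 : X) ≤ x⁻ := negPart_nonneg x
  have e1 := (subPre_le_iff.mp h1) _ hp
  have e2 := (subPre_le_iff.mp h2) _ hp
  have e3 := (subPre_le_iff.mp h1) _ hn
  have e4 := (subPre_le_iff.mp h2) _ hn
  have c1 : -((w : X →ₗ[ℝ] ℝ) (x⁺)) ≤ (f : X →ₗ[ℝ] ℝ) (x⁺) := by simpa using e1
  have c3 : -((w : X →ₗ[ℝ] ℝ) (x⁻)) ≤ (f : X →ₗ[ℝ] ℝ) (x⁻) := by simpa using e3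
  have key : (f : X →ₗ[ℝ] ℝ) x
      = (f : X →ₗ[ℝ] ℝ) (x⁺) - (f : X →ₗ[ℝ] ℝ) (x⁻) := by
    rw [← map_sub, posPart_sub_negPart]
  show |(f : X →ₗ[ℝ] ℝ) x| ≤ _
  rw [key]
  have a1 : |(f : X →ₗ[ℝ] ℝ) (x⁺)| ≤ (w : X →ₗ[ℝ] ℝ) (x⁺) := abs_le.mpr ⟨c1, e2⟩
  have a2 : |(f : X →ₗ[ℝ] ℝ) (x⁻)| ≤ (w : X →ₗ[ℝ] ℝ) (x⁻) := abs_le.mpr ⟨c3, e4⟩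
  have := abs_sub ((f : X →ₗ[ℝ] ℝ) (x⁺)) ((f : X →ₗ[ℝ] ℝ) (x⁻))
  linarith

/-- The canonical embedding of `X` into the order dual of `Y ⊆ X~`. -/
def hatEl (Y : Submodule ℝ (X →ₗ[ℝ] ℝ)) (x : X) : obDual Y :=
  ⟨hatFun X Y x, hatFun_mem X Y x⟩

/-- `X~` separates the points of `X`. -/
def SepPoints : Prop := ∀ x : X, x ≠ 0 → ∃ f : obDual X, (f : X →ₗ[ℝ] ℝ) x ≠ 0

noncomputable instance instBidualPre : Preorder ↥(obDual ↥(obDual X)) :=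
  instSubPre (obDual X) (obDual (obDual X))

/-- The canonical image of `X` in `X~~` is a regular sublattice:
`x_α ↓ 0` in `X` implies `x̂_α ↓ 0` in `X~~`. -/
def HatRegular : Prop :=
  ∀ D : Set X, D.Nonempty → DirectedOn (· ≥ ·) D → IsGLB D 0 →
    IsGLB (hatEl X (obDual X) '' D) (0 : obDual ↥(obDual X))

variable {X} in
/-- The net `x̂_α` is eventually order bounded in `X~~`. -/
def HatEvOB {ι : Type*} [Preorder ι] (x : ι → X) : Prop :=
  ∃ (b t : obDual ↥(obDual X)) (α₀ : ι), ∀ α, α₀ ≤ α →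
    b ≤ hatEl X (obDual X) (x α) ∧ hatEl X (obDual X) (x α) ≤ t

variable {X} in
/-- Bidual bounded uo-convergence. -/
def bbuoConvTo {ι : Type*} [Preorder ι] (x : ι → X) (l : X) : Prop :=
  uoConvTo x l ∧ HatEvOB x

/-- `X` has the `b`-property: every subset of `X` whose canonical image is
order bounded in `X~~` is order bounded in `X`. -/
def HasBProp : Prop :=
  ∀ A : Set X,
    (∃ b t : obDual ↥(obDual X), ∀ a ∈ A,
        b ≤ hatEl X (obDual X) a ∧ hatEl X (obDual X) a ≤ t) →
    ∃ b t : X, ∀ a ∈ A, b ≤ a ∧ a ≤ t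

/-- The Archimedean property for a lattice-ordered group. -/
def IsArch : Prop := ∀ x y : X, 0 ≤ x → (∀ n : ℕ, n • x ≤ y) → x = 0

end VL


/-- A net in a regular sublattice `S` of `Z` that uo-converges to `0` in `S`
also uo-converges to `0` in `Z`. -/
theorem statement9 {Z : Type u} [Lattice Z] [AddCommGroup Z]
    [CovariantClass Z Z (· + ·) (· ≤ ·)] [Module ℝ Z] [PosSMulMono ℝ Z]
    (harch : IsArch Z)
    (S : Submodule ℝ Z) (hsub : ∀ x ∈ S, ∀ y ∈ S, x ⊔ y ∈ S)
    (hregS : ∀ D : Set Z, D ⊆ (S : Set Z) → D.Nonempty → DirectedOn (· ≥ ·) D →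
      (∀ d ∈ D, 0 ≤ d) → (∀ s ∈ S, (∀ d ∈ D, s ≤ d) → s ≤ 0) → IsGLB D 0)
    {ι : Type v} [Preorder ι] [Nonempty ι] [IsDirected ι (· ≤ ·)]
    (x : ι → Z) (hxS : ∀ α, x α ∈ S)
    (huoS : ∀ u : Z, u ∈ S → 0 ≤ u →
      ∃ D : Set Z, D ⊆ (S : Set Z) ∧ D.Nonempty ∧ DirectedOn (· ≥ ·) D ∧
        (∀ d ∈ D, 0 ≤ d) ∧ (∀ s ∈ S, (∀ d ∈ D, s ≤ d) → s ≤ 0) ∧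
        ∀ d ∈ D, ∃ α₀ : ι, ∀ α, α₀ ≤ α → |x α| ⊓ u ≤ d) :
    uoConvTo x 0 := by
  intro u hu
  classical
  -- the net `z α = |x α| ⊓ u`
  set z : ι → Z := fun α => |x α| ⊓ u with hzdef
  have hz0 : ∀ α, (0 : Z) ≤ z α := fun α => le_inf (abs_nonneg _) hu
  -- auxiliary: nonnegativity and monotonicity of ℕ-smul
  have nsmul_nn : ∀ {a : Z}, 0 ≤ a → ∀ n : ℕ, (0 : Z) ≤ n • a := by
    intro a ha n
    induction n with
    | zero => simp
    | succ n ih => rw [succ_nsmul]; exact add_nonneg ih ha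
  have nsmul_mono : ∀ {a b : Z}, a ≤ b → ∀ n : ℕ, n • a ≤ n • b := by
    intro a b hab n
    induction n with
    | zero => simp
    | succ n ih => rw [succ_nsmul, succ_nsmul]; exact add_le_add ih hab
  -- the dominating set: all nonnegative eventual upper bounds of `z`
  set D : Set Z := {d | 0 ≤ d ∧ ∃ α₀ : ι, ∀ α, α₀ ≤ α → z α ≤ d} with hDdef
  have huD : u ∈ D := ⟨hu, Classical.arbitrary ι, fun α _ => inf_le_right⟩
  have hdir : DirectedOn (· ≥ ·) D := by
    rintro d₁ ⟨h1, a1, hb1⟩ d₂ ⟨h2, a2, hb2⟩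
    obtain ⟨a3, h31, h32⟩ := directed_of (· ≤ ·) a1 a2
    exact ⟨d₁ ⊓ d₂,
      ⟨le_inf h1 h2, a3, fun α hα => le_inf (hb1 α (h31.trans hα)) (hb2 α (h32.trans hα))⟩,
      inf_le_left, inf_le_right⟩
  -- key step: every lower bound of D is ≤ 0
  have hlb : ∀ s₀ ∈ lowerBounds D, s₀ ≤ 0 := by
    intro s₀ hs₀
    set s : Z := s₀ ⊔ 0 with hsdef
    have hs0 : (0 : Z) ≤ s := le_sup_right
    have hsD : ∀ d ∈ D, s ≤ d := fun d hd => sup_le (hs₀ hd) hd.1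
    -- s ≤ (u - v)⁺ for every v ∈ S₊
    have hsle : ∀ v ∈ S, 0 ≤ v → s ≤ (u - v)⁺ := by
      intro v hvS hv
      obtain ⟨D', hD'S, hne, hdir', hpos', hSinf, htail⟩ := huoS v hvS hv
      have hglb : IsGLB D' 0 := hregS D' hD'S hne hdir' hpos' hSinf
      have hlow : s - (u - v)⁺ ∈ lowerBounds D' := by
        intro e he
        have heD : e + (u - v)⁺ ∈ D := by
          obtain ⟨α₀, hb⟩ := htail e he
          refine ⟨add_nonneg (hpos' e he) (posPart_nonneg _), α₀, fun α hα => ?_⟩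
          have h1 : u ≤ v + (u - v)⁺ := by
            have := le_posPart (u - v)
            have h := add_le_add_right this v
            calc u = v + (u - v) := by abel
            _ ≤ v + (u - v)⁺ := h
          have h2 : z α ≤ |x α| ⊓ (v + (u - v)⁺) := inf_le_inf_left _ h1
          have h3 : |x α| ⊓ (v + (u - v)⁺) ≤ (|x α| + (u - v)⁺) ⊓ (v + (u - v)⁺) :=
            inf_le_inf_right _ (le_add_of_nonneg_right (posPart_nonneg _))
          have h4 : (|x α| + (u - v)⁺) ⊓ (v + (u - v)⁺) = (|x α| ⊓ v) + (u - v)⁺ :=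
            (inf_add _ _ _).symm
          have h5 : (|x α| ⊓ v) + (u - v)⁺ ≤ e + (u - v)⁺ :=
            add_le_add_left (hb α hα) _
          exact h2.trans (h3.trans (h4 ▸ h5))
        have := hsD _ heD
        exact sub_le_iff_le_add.mpr this
      have h3 : s - (u - v)⁺ ≤ 0 := hglb.2 hlow
      exact sub_nonpos.mp h3
    -- s is disjoint from every positive element of S
    have hperp : ∀ w ∈ S, 0 ≤ w → s ⊓ w = 0 := by
      intro w hwS hw0
      set t : Z := s ⊓ w with htdef
      have ht0 : (0 : Z) ≤ t := le_inf hs0 hw0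
      have key : ∀ n : ℕ, t ≤ (u - n • t)⁺ := by
        intro n
        have hnwS : (n • w : Z) ∈ S := nsmul_mem hwS n
        have h1 : s ≤ (u - n • w)⁺ := hsle (n • w) hnwS (nsmul_nn hw0 n)
        have h2 : (u - n • w)⁺ ≤ (u - n • t)⁺ := by
          have : u - n • w ≤ u - n • t := sub_le_sub_left (nsmul_mono inf_le_right n) u
          exact sup_le_sup_right this 0
        exact le_trans inf_le_left (h1.trans h2)
      have hn : ∀ n : ℕ, n • t ≤ u := by
        intro n
        induction n with
        | zero => simpa using hu
        | succ n ih =>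
          rw [succ_nsmul]
          calc n • t + t ≤ n • t + (u - n • t)⁺ := add_le_add_right (key n) _
          _ = (n • t + (u - n • t)) ⊔ (n • t + 0) := by rw [posPart_def, add_sup]
          _ = u ⊔ n • t := by rw [add_zero]; congr 1; abel
          _ = u := sup_eq_left.mpr ih
      exact harch t u ht0 hn
    -- s is disjoint from each `z α`
    have hdisj : ∀ α, s ⊓ z α = 0 := by
      intro α
      have habsS : |x α| ∈ S := by
        have := hsub (x α) (hxS α) (-(x α)) (S.neg_mem (hxS α))
        simpa [abs] using this
      have h1 : s ⊓ |x α| = 0 := hperp _ habsS (abs_nonneg _)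
      have h2 : s ⊓ z α ≤ s ⊓ |x α| := inf_le_inf_left _ inf_le_left
      exact le_antisymm (h1 ▸ h2) (le_inf hs0 (hz0 α))
    -- sum of disjoint elements is their sup
    have hsum : ∀ a b : Z, a ⊓ b = 0 → a + b = a ⊔ b := by
      intro a b hab
      have h1 : a + b - a ⊓ b = (a + b - a) ⊔ (a + b - b) := by
        rw [sub_eq_add_neg, neg_inf, add_sup, ← sub_eq_add_neg, ← sub_eq_add_neg]
      have h2 : a + b - a ⊓ b = b ⊔ a := by
        rw [h1]; congr 1 <;> abel
      rw [hab, sub_zero] at h2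
      rw [h2, sup_comm]
    -- inductively: u - n • s ∈ D
    have hmem : ∀ n : ℕ, u - n • s ∈ D := by
      intro n
      induction n with
      | zero => simpa using huD
      | succ n ih =>
        have hsle' : s ≤ u - n • s := hsD _ ih
        obtain ⟨hpos, α₀, hb⟩ := ih
        constructor
        · rw [succ_nsmul]
          have h1 : (0:Z) ≤ u - n • s - s := sub_nonneg.mpr hsle'
          calc (0:Z) ≤ u - n • s - s := h1
          _ = u - (n • s + s) := by abel
        · refine ⟨α₀, fun α hα => ?_⟩
          have h1 : z α ≤ u - n • s := hb α hα
          have h2 : z α + s = z α ⊔ s := hsum _ _ (by rw [inf_comm]; exact hdisj α)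
          have h3 : z α ⊔ s ≤ u - n • s := sup_le h1 hsle'
          have h4 : z α + s ≤ u - n • s := h2 ▸ h3
          have h5 : z α ≤ u - n • s - s := le_sub_iff_add_le.mpr h4
          calc z α ≤ u - n • s - s := h5
          _ = u - (n + 1) • s := by rw [succ_nsmul]; abel
    have hns : ∀ n : ℕ, n • s ≤ u := fun n => sub_nonneg.mp (hmem n).1
    have hs_eq : s = 0 := harch s u hs0 hns
    calc s₀ ≤ s := le_sup_left
    _ = 0 := hs_eq
  -- assemble the order convergence
  refine ⟨D, ⟨u, huD⟩, hdir, ⟨fun d hd => hd.1, fun s hs => hlb s hs⟩, ?_⟩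
  rintro d ⟨hd0, α₀, hdb⟩
  refine ⟨α₀, fun α hα => ⟨?_, ?_⟩⟩
  · have h1 : (0:Z) ≤ |x α - 0| ⊓ u := by
      simpa [hzdef] using hz0 α
    calc (0:Z) - d ≤ 0 := by simpa using neg_nonpos.mpr hd0
    _ ≤ |x α - 0| ⊓ u := h1
  · have := hdb α hα
    calc |x α - 0| ⊓ u = z α := by simp [hzdef]
    _ ≤ d := this
    _ ≤ 0 + d := by simp
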